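/- Let (𝔤, 𝔥, 𝔫) be a tame triplet. Then there exists a unique induced-type 𝔤-module structure ρ on U(𝔫_α): a Lie algebra homomorphism ρ : 𝔤 → End_k(U(𝔫_α)) such that ρ(x)(u) = ι(x)·u for all x ∈ 𝔫 and u ∈ U(𝔫_α), and for all h ∈ 𝔥: ρ(h)(1) = 0, ρ(h)(u·v) = ρ(h)(u)·v + u·ρ(h)(v) for all u, v ∈ U(𝔫_α), and ρ(h)(ι(x)) = ι(π_𝔫([h, x])) for all x ∈ 𝔫. -/

import Mathlib

attribute [local instance] LieRing.ofAssociativeRing LieAlgebra.ofAssociativeAlgebra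

open UniversalEnvelopingAlgebra TrivSqZeroExt

section Aux

variable (k : Type*) [Field k] (M : Type*) [LieRing M] [LieAlgebra k M]

local notation "U" => UniversalEnvelopingAlgebra k M

/-- The algebra hom `u ↦ (u, f u)` associated to a Leibniz map `f`. -/
def stmt11Psi (f : Module.End k U) (h1 : f 1 = 0)
    (hl : ∀ u v : U, f (u * v) = f u * v + u * f v) :
    U →ₐ[k] TrivSqZeroExt U U where
  toFun u := ⟨u, f u⟩
  map_one' := by ext <;> simp [h1]
  map_mul' u v := by
    ext
    · rfl
    · simp only [TrivSqZeroExt.snd_mul, TrivSqZeroExt.snd_mk, TrivSqZeroExt.fst_mk, hl u v,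
        smul_eq_mul, MulOpposite.smul_eq_mul_unop, MulOpposite.unop_op]
      exact add_comm _ _
  map_zero' := by ext <;> simp
  map_add' u v := by ext <;> simp <;> rfl
  commutes' c := by
    ext
    · simp [TrivSqZeroExt.algebraMap_eq_inl']
    · show f (algebraMap k U c) = (0 : U)
      rw [Algebra.algebraMap_eq_smul_one, map_smul, h1, smul_zero]

/-- Leibniz maps vanishing at `1` agreeing on generators agree. -/
theorem stmt11_derLike_ext {f g : Module.End k U}
    (hf1 : f 1 = 0) (hg1 : g 1 = 0)
    (hf : ∀ u v : U, f (u * v) = f u * v + u * f v)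
    (hg : ∀ u v : U, g (u * v) = g u * v + u * g v)
    (h : ∀ a : M, f (ι k a) = g (ι k a)) : f = g := by
  have key : stmt11Psi k M f hf1 hf = stmt11Psi k M g hg1 hg := by
    apply UniversalEnvelopingAlgebra.hom_ext
    apply LieHom.ext
    intro a
    show (⟨ι k a, f (ι k a)⟩ : TrivSqZeroExt U U) = ⟨ι k a, g (ι k a)⟩
    rw [h a]
  ext u
  have := congrArg (fun ψ => TrivSqZeroExt.snd (ψ u)) key
  exact this

end Aux

section Der
variable (k : Type*) [Field k] (M : Type*) [LieRing M] [LieAlgebra k M]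
local notation "U" => UniversalEnvelopingAlgebra k M

variable (d : Module.End k M)

/-- Lie hom `a ↦ (ι a, ι (d a))` into the trivial square-zero extension. -/
def stmt11Phi (hd : ∀ a b : M, d ⁅a, b⁆ = ⁅d a, b⁆ + ⁅a, d b⁆) : M →ₗ⁅k⁆ TrivSqZeroExt U U where
  toFun a := ⟨ι k a, ι k (d a)⟩
  map_add' a b := by ext <;> simp <;> rfl
  map_smul' c a := by ext <;> simp <;> rfl
  map_lie' {a b} := by
    change _ = (_ : TrivSqZeroExt U U) * _ - _ * _
    ext
    · show ι k ⁅a, b⁆ = ι k a * ι k b - ι k b * ι k a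
      rw [LieHom.map_lie, LieRing.of_associative_ring_bracket]
    · show ι k (d ⁅a, b⁆) = (ι k a * ι k (d b) + ι k (d a) * ι k b) - (ι k b * ι k (d a) + ι k (d b) * ι k a)
      rw [hd a b, map_add, LieHom.map_lie, LieHom.map_lie, LieRing.of_associative_ring_bracket,
        LieRing.of_associative_ring_bracket]
      abel

noncomputable def stmt11D (hd : ∀ a b : M, d ⁅a, b⁆ = ⁅d a, b⁆ + ⁅a, d b⁆) : Module.End k U :=
  ((TrivSqZeroExt.sndHom U U).restrictScalars k).comp
    (UniversalEnvelopingAlgebra.lift k (stmt11Phi k M d hd)).toLinearMap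

theorem stmt11_fst (hd : ∀ a b : M, d ⁅a, b⁆ = ⁅d a, b⁆ + ⁅a, d b⁆) (u : U) :
    TrivSqZeroExt.fst (UniversalEnvelopingAlgebra.lift k (stmt11Phi k M d hd) u) = u := by
  have key : (TrivSqZeroExt.fstHom k U U).comp
      (UniversalEnvelopingAlgebra.lift k (stmt11Phi k M d hd)) = AlgHom.id k U := by
    apply UniversalEnvelopingAlgebra.hom_ext
    apply LieHom.ext
    intro a
    show TrivSqZeroExt.fst (UniversalEnvelopingAlgebra.lift k (stmt11Phi k M d hd) (ι k a))
        = ι k a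
    rw [UniversalEnvelopingAlgebra.lift_ι_apply]
    rfl
  exact congrArg (fun ψ => ψ u) key

theorem stmt11D_ι (hd : ∀ a b : M, d ⁅a, b⁆ = ⁅d a, b⁆ + ⁅a, d b⁆) (a : M) : stmt11D k M d hd (ι k a) = ι k (d a) := by
  show TrivSqZeroExt.snd (UniversalEnvelopingAlgebra.lift k (stmt11Phi k M d hd) (ι k a)) = _
  rw [UniversalEnvelopingAlgebra.lift_ι_apply]
  rfl

theorem stmt11D_one (hd : ∀ a b : M, d ⁅a, b⁆ = ⁅d a, b⁆ + ⁅a, d b⁆) : stmt11D k M d hd 1 = 0 := by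
  show TrivSqZeroExt.snd (UniversalEnvelopingAlgebra.lift k (stmt11Phi k M d hd) 1) = 0
  rw [map_one]
  rfl

theorem stmt11D_mul (hd : ∀ a b : M, d ⁅a, b⁆ = ⁅d a, b⁆ + ⁅a, d b⁆) (u v : U) :
    stmt11D k M d hd (u * v) = stmt11D k M d hd u * v + u * stmt11D k M d hd v := by
  show TrivSqZeroExt.snd (UniversalEnvelopingAlgebra.lift k (stmt11Phi k M d hd) (u * v)) = _
  rw [map_mul, TrivSqZeroExt.snd_mul]
  simp only [smul_eq_mul, MulOpposite.smul_eq_mul_unop, MulOpposite.unop_op,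
    stmt11_fst]
  exact add_comm _ _

end Der

section Der2
variable (k : Type*) [Field k] (M : Type*) [LieRing M] [LieAlgebra k M]
local notation "U" => UniversalEnvelopingAlgebra k M
variable {d d' d1 d2 d3 : Module.End k M}

theorem stmt11D_congr (hd : ∀ a b : M, d ⁅a, b⁆ = ⁅d a, b⁆ + ⁅a, d b⁆)
    (hd' : ∀ a b : M, d' ⁅a, b⁆ = ⁅d' a, b⁆ + ⁅a, d' b⁆)
    (h : ∀ a, d a = d' a) : stmt11D k M d hd = stmt11D k M d' hd' := by
  refine stmt11_derLike_ext k M (stmt11D_one k M d hd) (stmt11D_one k M d' hd')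
    (stmt11D_mul k M d hd) (stmt11D_mul k M d' hd') fun a => ?_
  rw [stmt11D_ι, stmt11D_ι, h a]

theorem stmt11D_eq_zero (hd : ∀ a b : M, d ⁅a, b⁆ = ⁅d a, b⁆ + ⁅a, d b⁆)
    (h : ∀ a, d a = 0) : stmt11D k M d hd = 0 := by
  refine stmt11_derLike_ext k M (stmt11D_one k M d hd) rfl
    (stmt11D_mul k M d hd) (fun u v => by simp) fun a => ?_
  rw [stmt11D_ι, h a]
  simp

theorem stmt11D_add_eq (h1 : ∀ a b : M, d1 ⁅a, b⁆ = ⁅d1 a, b⁆ + ⁅a, d1 b⁆)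
    (h2 : ∀ a b : M, d2 ⁅a, b⁆ = ⁅d2 a, b⁆ + ⁅a, d2 b⁆)
    (h3 : ∀ a b : M, d3 ⁅a, b⁆ = ⁅d3 a, b⁆ + ⁅a, d3 b⁆)
    (h : ∀ a, d3 a = d1 a + d2 a) :
    stmt11D k M d3 h3 = stmt11D k M d1 h1 + stmt11D k M d2 h2 := by
  refine stmt11_derLike_ext k M (stmt11D_one k M d3 h3) ?_ (stmt11D_mul k M d3 h3) ?_ fun a => ?_
  · simp [stmt11D_one]
  · intro u v
    simp only [LinearMap.add_apply, stmt11D_mul]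
    noncomm_ring
  · rw [stmt11D_ι, LinearMap.add_apply, stmt11D_ι, stmt11D_ι, h a, map_add]

theorem stmt11D_smul_eq (c : k) (hd : ∀ a b : M, d ⁅a, b⁆ = ⁅d a, b⁆ + ⁅a, d b⁆)
    (hd' : ∀ a b : M, d' ⁅a, b⁆ = ⁅d' a, b⁆ + ⁅a, d' b⁆)
    (h : ∀ a, d' a = c • d a) : stmt11D k M d' hd' = c • stmt11D k M d hd := by
  refine stmt11_derLike_ext k M (stmt11D_one k M d' hd') ?_ (stmt11D_mul k M d' hd') ?_ fun a => ?_
  · simp [stmt11D_one]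
  · intro u v
    simp only [LinearMap.smul_apply, stmt11D_mul, smul_add, smul_mul_assoc, mul_smul_comm]
  · rw [stmt11D_ι, LinearMap.smul_apply, stmt11D_ι, h a, map_smul]

theorem stmt11D_lie_eq (h1 : ∀ a b : M, d1 ⁅a, b⁆ = ⁅d1 a, b⁆ + ⁅a, d1 b⁆)
    (h2 : ∀ a b : M, d2 ⁅a, b⁆ = ⁅d2 a, b⁆ + ⁅a, d2 b⁆)
    (h3 : ∀ a b : M, d3 ⁅a, b⁆ = ⁅d3 a, b⁆ + ⁅a, d3 b⁆)
    (h : ∀ a, d3 a = d1 (d2 a) - d2 (d1 a)) :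
    stmt11D k M d3 h3 = ⁅stmt11D k M d1 h1, stmt11D k M d2 h2⁆ := by
  refine stmt11_derLike_ext k M (stmt11D_one k M d3 h3) ?_ (stmt11D_mul k M d3 h3) ?_ fun a => ?_
  · simp [LieRing.of_associative_ring_bracket, Module.End.mul_apply, stmt11D_one]
  · intro u v
    simp only [LieRing.of_associative_ring_bracket, LinearMap.sub_apply, Module.End.mul_apply,
      stmt11D_mul, map_add, map_sub]
    noncomm_ring
  · simp only [stmt11D_ι, h a, map_sub, LieRing.of_associative_ring_bracket,
      LinearMap.sub_apply, Module.End.mul_apply, stmt11D_ι]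

end Der2

/-- Let `(L, H, N)` be a tame triplet (notation as in Statement 9) and let
`M` (playing the role of `𝔫_α`) be a Lie algebra over `k` realizing `N` equipped with the
bracket `α(x,y) = πN [x,y]`: `incl : M →ₗ[k] L` is injective with range `N` and
`incl ⁅a,b⁆ = πN ⁅incl a, incl b⁆`.  Then there exists a unique induced-type `L`-module
structure `ρ` on `U(M)`: a Lie algebra homomorphism `ρ : L → End_k(U(M))` such that
`ρ(x)(u) = ι(x)·u` for `x ∈ N`, and for all `h ∈ H`: `ρ(h)(1) = 0`, `ρ(h)` is a derivation,
and `ρ(h)(ι(x)) = ι(πN [h, x])` for `x ∈ N`. -/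
theorem stmt_11 (k : Type*) [Field k] [CharZero k] (L : Type*) [LieRing L] [LieAlgebra k L]
    (H : LieSubalgebra k L) (N : Submodule k L)
    (hcompl : IsCompl H.toSubmodule N)
    (πH πN : L →ₗ[k] L)
    (hπH : ∀ x : L, πH x ∈ H) (hπN : ∀ x : L, πN x ∈ N)
    (hsum : ∀ x : L, πH x + πN x = x)
    (hHN : ∀ h ∈ H, ∀ x ∈ N, ⁅h, x⁆ ∈ N)
    (htame : ∀ x ∈ N, ∀ y ∈ N, ∀ z ∈ N, ⁅πH ⁅x, y⁆, z⁆ = (0 : L))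
    (M : Type*) [LieRing M] [LieAlgebra k M]
    (incl : M →ₗ[k] L) (hinj : Function.Injective incl)
    (hrange : LinearMap.range incl = N)
    (hbr : ∀ a b : M, incl ⁅a, b⁆ = πN ⁅incl a, incl b⁆) :
    ∃! ρ : L →ₗ⁅k⁆ Module.End k (UniversalEnvelopingAlgebra k M),
      (∀ (a : M) (u : UniversalEnvelopingAlgebra k M),
          ρ (incl a) u = UniversalEnvelopingAlgebra.ι k a * u) ∧
      (∀ h ∈ H, ρ h (1 : UniversalEnvelopingAlgebra k M) = 0) ∧
      (∀ h ∈ H, ∀ u v : UniversalEnvelopingAlgebra k M,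
          ρ h (u * v) = ρ h u * v + u * ρ h v) ∧
      (∀ h ∈ H, ∀ a b : M, incl b = πN ⁅h, incl a⁆ →
          ρ h (UniversalEnvelopingAlgebra.ι k a) = UniversalEnvelopingAlgebra.ι k b) := by
  classical
  have hmem : ∀ a : M, incl a ∈ N := fun a => hrange ▸ LinearMap.mem_range_self incl a
  have hπN_N : ∀ x ∈ N, πN x = x := by
    intro x hx
    have h1 : πH x ∈ N := by
      have h2 : πH x = x - πN x := by rw [eq_sub_iff_add_eq, hsum x]
      rw [h2]; exact Submodule.sub_mem N hx (hπN x)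
    have h0 : πH x = 0 := Submodule.disjoint_def.mp hcompl.disjoint (πH x) (hπH x) h1
    have h3 := hsum x; rw [h0, zero_add] at h3; exact h3
  have hπN_H : ∀ h ∈ H, πN h = 0 := by
    intro h hh
    have h1 : πN h ∈ H.toSubmodule := by
      have h2 : πN h = h - πH h := by rw [eq_sub_iff_add_eq, add_comm, hsum h]
      rw [h2]; exact Submodule.sub_mem _ hh (hπH h)
    exact Submodule.disjoint_def.mp hcompl.disjoint (πN h) h1 (hπN h)
  have hπH_H : ∀ h ∈ H, πH h = h := by
    intro h hh
    have h3 := hsum h; rw [hπN_H h hh, add_zero] at h3; exact h3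
  have hπH_N : ∀ x ∈ N, πH x = 0 := by
    intro x hx
    have h3 := hsum x; rw [hπN_N x hx] at h3
    nth_rewrite 3 [← zero_add x] at h3
    exact add_right_cancel h3
  obtain ⟨toM, h_incl_toM⟩ : ∃ toM : L →ₗ[k] M, ∀ x : L, incl (toM x) = πN x := by
    refine ⟨(((LinearEquiv.ofInjective incl hinj).trans
      (LinearEquiv.ofEq _ _ hrange)).symm).toLinearMap ∘ₗ πN.codRestrict N hπN, fun x => ?_⟩
    set e : M ≃ₗ[k] N := (LinearEquiv.ofInjective incl hinj).trans (LinearEquiv.ofEq _ _ hrange)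
      with he
    have hcoe : ∀ m : M, ((e m : N) : L) = incl m := fun m => rfl
    show incl (e.symm ⟨πN x, hπN x⟩) = πN x
    rw [← hcoe (e.symm ⟨πN x, hπN x⟩), e.apply_symm_apply]
  have htoM_incl : ∀ a : M, toM (incl a) = a :=
    fun a => hinj (by rw [h_incl_toM, hπN_N _ (hmem a)])
  have htoM_H : ∀ h ∈ H, toM h = 0 :=
    fun h hh => hinj (by rw [h_incl_toM, hπN_H h hh, map_zero])
  obtain ⟨δ, hδ⟩ : ∃ δ : L → Module.End k M, ∀ (x : L) (a : M), δ x a = toM ⁅x, incl a⁆ :=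
    ⟨fun x => toM ∘ₗ ((LieAlgebra.ad k L x) ∘ₗ incl),
      fun x a => by simp [LieAlgebra.ad_apply]⟩
  have hδπ : ∀ (x : L) (a : M), incl (δ x a) = πN ⁅x, incl a⁆ :=
    fun x a => by rw [hδ, h_incl_toM]
  have hδH : ∀ h ∈ H, ∀ a : M, incl (δ h a) = ⁅h, incl a⁆ :=
    fun h hh a => by rw [hδπ, hπN_N _ (hHN h hh _ (hmem a))]
  have hder : ∀ h, h ∈ H → ∀ a b : M, δ h ⁅a, b⁆ = ⁅δ h a, b⁆ + ⁅a, δ h b⁆ := by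
    intro h hh a b
    apply hinj
    rw [map_add, hδπ, hbr a b]
    have hz : πN ⁅h, πN ⁅incl a, incl b⁆⁆ = πN ⁅h, ⁅incl a, incl b⁆⁆ := by
      conv_rhs => rw [← hsum ⁅incl a, incl b⁆]
      rw [lie_add, map_add, hπN_H _ (H.lie_mem hh (hπH _)), zero_add]
    rw [hz, leibniz_lie h (incl a) (incl b), map_add, ← hδH h hh a, ← hδH h hh b,
      ← hbr, ← hbr]
  obtain ⟨ρ₀, hρ₀⟩ : ∃ ρ₀ : L → Module.End k (UniversalEnvelopingAlgebra k M),
      ∀ x : L, ρ₀ x = LinearMap.mulLeft k (UniversalEnvelopingAlgebra.ι k (toM x)) +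
        stmt11D k M (δ (πH x)) (hder (πH x) (hπH x)) := ⟨_, fun _ => rfl⟩
  have ρ₀_incl : ∀ a : M,
      ρ₀ (incl a) = LinearMap.mulLeft k (UniversalEnvelopingAlgebra.ι k a) := by
    intro a
    rw [hρ₀, htoM_incl, stmt11D_eq_zero k M _
      (fun c => by rw [hδ, hπH_N _ (hmem a), zero_lie, map_zero]), add_zero]
  have ρ₀_H : ∀ h (hh : h ∈ H), ρ₀ h = stmt11D k M (δ h) (hder h hh) := by
    intro h hh
    rw [hρ₀, htoM_H h hh, map_zero]
    have hz : LinearMap.mulLeft k (0 : UniversalEnvelopingAlgebra k M) = 0 := by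
      ext u; simp
    rw [hz, zero_add]
    exact stmt11D_congr k M _ _ (fun a => by rw [hδ, hδ, hπH_H h hh])
  have hadd : ∀ x y : L, ρ₀ (x + y) = ρ₀ x + ρ₀ y := by
    intro x y
    rw [hρ₀, hρ₀, hρ₀]
    have h1 : LinearMap.mulLeft k (UniversalEnvelopingAlgebra.ι k (toM (x + y))) =
        LinearMap.mulLeft k (UniversalEnvelopingAlgebra.ι k (toM x)) +
          LinearMap.mulLeft k (UniversalEnvelopingAlgebra.ι k (toM y)) := by
      ext u; simp [add_mul]
    rw [h1, stmt11D_add_eq k M (hder (πH x) (hπH x)) (hder (πH y) (hπH y))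
      (hder (πH (x + y)) (hπH _))
      (fun a => by rw [map_add, hδ, hδ, hδ, add_lie, map_add])]
    abel
  have hsmul : ∀ (c : k) (x : L), ρ₀ (c • x) = c • ρ₀ x := by
    intro c x
    rw [hρ₀, hρ₀]
    have h1 : LinearMap.mulLeft k (UniversalEnvelopingAlgebra.ι k (toM (c • x))) =
        c • LinearMap.mulLeft k (UniversalEnvelopingAlgebra.ι k (toM x)) := by
      ext u; simp [smul_mul_assoc]
    rw [h1, stmt11D_smul_eq k M c (hder (πH x) (hπH x)) (hder (πH (c • x)) (hπH _))
      (fun a => by rw [map_smul, hδ, hδ, smul_lie, map_smul])]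
    rw [smul_add]
  have case_HH : ∀ h, h ∈ H → ∀ h', h' ∈ H → ρ₀ ⁅h, h'⁆ = ⁅ρ₀ h, ρ₀ h'⁆ := by
    intro h hh h' hh'
    have hb : ⁅h, h'⁆ ∈ H := H.lie_mem hh hh'
    rw [ρ₀_H _ hb, ρ₀_H h hh, ρ₀_H h' hh']
    refine stmt11D_lie_eq k M _ _ _ fun a => hinj ?_
    rw [hδH _ hb, map_sub, hδH h hh, hδH h' hh', hδH h' hh', hδH h hh, lie_lie]
  have case_HN : ∀ h, h ∈ H → ∀ a : M, ρ₀ ⁅h, incl a⁆ = ⁅ρ₀ h, ρ₀ (incl a)⁆ := by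
    intro h hh a
    rw [← hδH h hh a, ρ₀_incl, ρ₀_incl, ρ₀_H h hh]
    ext u
    simp only [LieRing.of_associative_ring_bracket, LinearMap.sub_apply, Module.End.mul_apply,
      LinearMap.mulLeft_apply, stmt11D_mul, stmt11D_ι]
    abel
  have case_NN : ∀ a b : M, ρ₀ ⁅incl a, incl b⁆ = ⁅ρ₀ (incl a), ρ₀ (incl b)⁆ := by
    intro a b
    rw [hρ₀, ρ₀_incl, ρ₀_incl]
    have htoMz : toM ⁅incl a, incl b⁆ = ⁅a, b⁆ := hinj (by rw [h_incl_toM, ← hbr])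
    rw [htoMz, stmt11D_eq_zero k M (hder (πH ⁅incl a, incl b⁆) (hπH _)) (fun c => by
      rw [hδ, htame (incl a) (hmem a) (incl b) (hmem b) (incl c) (hmem c), map_zero]),
      add_zero]
    ext u
    simp only [LieRing.of_associative_ring_bracket, LinearMap.sub_apply, Module.End.mul_apply,
      LinearMap.mulLeft_apply, LieHom.map_lie]
    noncomm_ring
  obtain ⟨P, hP⟩ : ∃ P : L →ₗ[k] Module.End k (UniversalEnvelopingAlgebra k M),
      ∀ x : L, P x = ρ₀ x :=
    ⟨{ toFun := ρ₀, map_add' := hadd,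
       map_smul' := fun c x => by rw [RingHom.id_apply]; exact hsmul c x },
      fun _ => rfl⟩
  have hneg : ∀ z : L, ρ₀ (-z) = -ρ₀ z := fun z => by rw [← hP, ← hP, map_neg]
  have case_NH : ∀ h, h ∈ H → ∀ a : M, ρ₀ ⁅incl a, h⁆ = ⁅ρ₀ (incl a), ρ₀ h⁆ := by
    intro h hh a
    rw [(lie_skew (incl a) h).symm, hneg, case_HN h hh a]
    exact lie_skew _ _
  have hmaplie : ∀ x y : L, ρ₀ ⁅x, y⁆ = ⁅ρ₀ x, ρ₀ y⁆ := by
    intro x y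
    have hNx : πN x = incl (toM x) := (h_incl_toM x).symm
    have hNy : πN y = incl (toM y) := (h_incl_toM y).symm
    have expand : ⁅x, y⁆ = ⁅πH x, πH y⁆ + ⁅πH x, incl (toM y)⁆ +
        (⁅incl (toM x), πH y⁆ + ⁅incl (toM x), incl (toM y)⁆) := by
      conv_lhs => rw [← hsum x, ← hsum y]
      rw [hNx, hNy, add_lie, lie_add, lie_add]
    have hrx : ρ₀ x = ρ₀ (πH x) + ρ₀ (incl (toM x)) := by
      conv_lhs => rw [← hsum x]
      rw [hNx, hadd]
    have hry : ρ₀ y = ρ₀ (πH y) + ρ₀ (incl (toM y)) := by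
      conv_lhs => rw [← hsum y]
      rw [hNy, hadd]
    rw [expand, hadd, hadd, hadd, case_HH _ (hπH x) _ (hπH y), case_HN _ (hπH x) (toM y),
      case_NH _ (hπH y) (toM x), case_NN, hrx, hry, add_lie, lie_add, lie_add]
  have hliePx : ∀ x y : L, P ⁅x, y⁆ = ⁅P x, P y⁆ := fun x y => by
    rw [hP, hP, hP]; exact hmaplie x y
  refine ⟨{ toLinearMap := P, map_lie' := fun {x y} => hliePx x y }, ⟨?_, ?_, ?_, ?_⟩, ?_⟩
  · intro a u
    show P (incl a) u = _
    rw [hP, ρ₀_incl, LinearMap.mulLeft_apply]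
  · intro h hh
    show P h 1 = 0
    rw [hP, ρ₀_H h hh, stmt11D_one]
  · intro h hh u v
    show P h (u * v) = P h u * v + u * P h v
    rw [hP, ρ₀_H h hh, stmt11D_mul]
  · intro h hh a b hb
    show P h (UniversalEnvelopingAlgebra.ι k a) = UniversalEnvelopingAlgebra.ι k b
    rw [hP, ρ₀_H h hh, stmt11D_ι]
    congr 1
    exact hinj (by rw [hδπ, ← hb])
  · rintro ρ' ⟨p1, p2, p3, p4⟩
    have hN' : ∀ a : M, ρ' (incl a) = ρ₀ (incl a) := by
      intro a
      rw [ρ₀_incl]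
      ext u
      rw [p1, LinearMap.mulLeft_apply]
    have hH' : ∀ h (hh : h ∈ H), ρ' h = ρ₀ h := by
      intro h hh
      rw [ρ₀_H h hh]
      refine stmt11_derLike_ext k M (p2 h hh) (stmt11D_one k M _ _) (p3 h hh)
        (stmt11D_mul k M _ _) fun a => ?_
      rw [stmt11D_ι]
      exact p4 h hh a (δ h a) (hδπ h a)
    apply LieHom.ext
    intro x
    have hNx : πN x = incl (toM x) := (h_incl_toM x).symm
    have e1 : ρ' x = ρ' (πH x) + ρ' (incl (toM x)) := by
      conv_lhs => rw [← hsum x]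
      rw [hNx, map_add]
    rw [e1, hN' (toM x), hH' _ (hπH x)]
    show _ = P x
    rw [hP]
    conv_rhs => rw [← hsum x]
    rw [hNx, hadd]
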